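/- There exists a computable function f : ℕ → ℕ such that K(n) ≤ f(n) + O(1) for all n and f(n) ≤ K(n) + O(1) for infinitely many n. (Existence of Solovay functions.) -/

import Mathlib

open Filter

namespace Solovay

/-- Length of the string coded by `n` via the length-lexicographic bijection
(the string coded by `n` is the binary expansion of `n+1` with the leading `1` removed). -/
def strLen (n : ℕ) : ℕ := Nat.log 2 (n + 1)

/-- `x` is a prefix of `y`, viewing naturals as strings via the length-lex bijection. -/
def StrPrefix (x y : ℕ) : Prop := ∃ m, (y + 1) / 2 ^ m = x + 1

/-- A partial computable machine (given by a code) is prefix-free if its domain is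
a prefix-free set of strings. -/
def PrefixFree (c : Nat.Partrec.Code) : Prop :=
  ∀ p q, (c.eval p).Dom → (c.eval q).Dom → StrPrefix p q → p = q

/-- Prefix-free Kolmogorov complexity `K` (defined, up to an additive constant,
as via a fixed universal prefix-free machine, by charging each prefix-free machine
its index plus one). -/
noncomputable def K (x : ℕ) : ℕ :=
  sInf {k | ∃ c p, PrefixFree c ∧ x ∈ c.eval p ∧ k = Encodable.encode c + 1 + strLen p}

/-- Plain Kolmogorov complexity `C`. -/
noncomputable def C (x : ℕ) : ℕ :=
  sInf {k | ∃ (c : Nat.Partrec.Code) (p : ℕ), x ∈ c.eval p ∧ k = Encodable.encode c + 1 + strLen p}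

/-- The first `n` bits of the sequence `α`, coded as a string/natural number. -/
def seg (α : ℕ → Bool) : ℕ → ℕ
  | 0 => 0
  | n + 1 => 2 * seg α n + 1 + (if α n then 1 else 0)

/-- Martin-Löf randomness of a binary sequence, via the Levin–Schnorr characterization. -/
def MLRandomSeq (α : ℕ → Bool) : Prop := ∃ c : ℕ, ∀ n, n ≤ K (seg α n) + c

/-- The real number in `[0,1]` whose binary expansion is `α`. -/
noncomputable def realOf (α : ℕ → Bool) : ℝ :=
  ∑' n, if α n then (1 / 2 : ℝ) ^ (n + 1) else 0

/-- Martin-Löf randomness of a real: some binary expansion of it is Martin-Löf random. -/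
def MLRandomReal (r : ℝ) : Prop := ∃ α : ℕ → Bool, r = realOf α ∧ MLRandomSeq α

/-- A Solovay function: a computable upper bound of `K` (up to an additive constant)
which is within a constant of `K` infinitely often. -/
def SolovayFunction (f : ℕ → ℕ) : Prop :=
  Computable f ∧ (∃ c, ∀ n, K n ≤ f n + c) ∧ (∃ c, {n | f n ≤ K n + c}.Infinite)

/-- K-triviality of a binary sequence. -/
def KTrivial (α : ℕ → Bool) : Prop := ∃ c, ∀ n, K (seg α n) ≤ K n + c

/-- Number of bits selected by the selection rule `s` among the first `n` bits of `α`. -/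
def selCount (s : ℕ → Bool) (α : ℕ → Bool) (n : ℕ) : ℕ :=
  ((Finset.range n).filter fun i => s (seg α i) = true).card

/-- Number of selected bits equal to `1` among the first `n` bits of `α`. -/
def selOnes (s : ℕ → Bool) (α : ℕ → Bool) (n : ℕ) : ℕ :=
  ((Finset.range n).filter fun i => s (seg α i) = true ∧ α i = true).card

/-- Church stochasticity: every total computable selection rule which selects
infinitely many bits selects a subsequence whose frequency of ones tends to `1/2`. -/
def ChurchStochastic (α : ℕ → Bool) : Prop :=
  ∀ s : ℕ → Bool, Computable s →
    Tendsto (fun n => selCount s α n) atTop atTop →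
    Tendsto (fun n => (selOnes s α n : ℝ) / (selCount s α n : ℝ)) atTop (nhds (1 / 2))

/-- Schnorr randomness: `α` passes every Schnorr test, i.e. every uniformly computable
enumeration of prefix-free sets of strings whose Lebesgue measure is exactly `2^{-n}`
at level `n`. -/
def SchnorrRandom (α : ℕ → Bool) : Prop :=
  ∀ g : ℕ → ℕ → Option ℕ, Computable₂ g →
    (∀ n w w', (∃ i, g n i = some w) → (∃ i, g n i = some w') → StrPrefix w w' → w = w') →
    (∀ n, ∑' w : {w // ∃ i, g n i = some w}, (1 / 2 : ℝ) ^ strLen (w : ℕ) = (1 / 2 : ℝ) ^ n) →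
    ¬ ∀ n, ∃ w, (∃ i, g n i = some w) ∧ seg α (strLen w) = w

/-! ### Auxiliary development for the existence of Solovay functions -/

section SolovayAux

open Nat.Partrec (Code)
open Nat.Partrec.Code
open Denumerable (ofNat)

/-- Numeric code of a bit string (bits appended at the least-significant end). -/
def encStr (l : List Bool) : ℕ := l.foldl (fun n b => 2 * n + 1 + cond b 1 0) 0

theorem encStr_foldl (t : List Bool) : ∀ a : ℕ,
    t.foldl (fun n b => 2 * n + 1 + cond b 1 0) a = a * 2 ^ t.length + encStr t := by
  induction t with
  | nil => intro a; simp [encStr]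
  | cons b t ih =>
    intro a
    have h1 := ih (2 * a + 1 + cond b 1 0)
    have h2 := ih (2 * 0 + 1 + cond b 1 0)
    simp only [encStr, List.foldl_cons, List.length_cons] at h1 h2 ⊢
    rw [h1, h2, pow_succ]
    ring

theorem encStr_append (s t : List Bool) :
    encStr (s ++ t) = encStr s * 2 ^ t.length + encStr t := by
  have : encStr (s ++ t) = t.foldl (fun n b => 2 * n + 1 + cond b 1 0) (encStr s) := by
    simp [encStr, List.foldl_append]
  rw [this, encStr_foldl]

theorem encStr_bounds (l : List Bool) :
    2 ^ l.length ≤ encStr l + 1 ∧ encStr l + 1 < 2 ^ (l.length + 1) := by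
  induction l with
  | nil => simp [encStr]
  | cons b t ih =>
    have h : encStr (b :: t) = (2 * 0 + 1 + cond b 1 0) * 2 ^ t.length + encStr t := by
      have := encStr_append [b] t
      simpa [encStr] using this
    have hp : (2:ℕ) ^ (t.length + 1) = 2 * 2 ^ t.length := by rw [pow_succ]; ring
    have hp2 : (2:ℕ) ^ (t.length + 1 + 1) = 2 * (2 * 2 ^ t.length) := by
      rw [pow_succ, pow_succ]; ring
    rcases ih with ⟨ih1, ih2⟩
    rw [hp] at ih2
    simp only [List.length_cons, h, hp, hp2]
    cases b <;> simp <;> omega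

/-- Decode a natural number into the bit string it represents. -/
def decodeStr : ℕ → List Bool
  | 0 => []
  | n + 1 => decodeStr (n / 2) ++ [decide (n % 2 = 1)]
decreasing_by exact Nat.lt_succ_of_le (Nat.div_le_self n 2)

theorem encStr_decodeStr (n : ℕ) : encStr (decodeStr n) = n := by
  induction n using Nat.strong_induction_on with
  | _ n ih =>
    match n with
    | 0 => rw [decodeStr]; rfl
    | Nat.succ m =>
      rw [decodeStr, encStr_append]
      have h := ih (m / 2) (Nat.lt_succ_of_le (Nat.div_le_self m 2))
      have hb : encStr [decide (m % 2 = 1)] = 1 + m % 2 := by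
        rcases Nat.mod_two_eq_zero_or_one m with h2 | h2 <;> simp [encStr, h2]
      rw [h, hb]
      simp only [List.length_singleton, pow_one]
      omega

theorem decodeStr_encStr (l : List Bool) : decodeStr (encStr l) = l := by
  induction l using List.reverseRecOn with
  | nil => rw [show encStr [] = 0 from rfl, decodeStr]
  | append_singleton s b ih =>
    rw [encStr_append]
    cases b
    · have h : encStr s * 2 ^ (1:ℕ) + encStr [false] = 2 * encStr s + 1 := by
        simp [encStr]; ring
      simp only [List.length_singleton, h]
      rw [show 2 * encStr s + 1 = (2 * encStr s) + 1 from rfl, decodeStr]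
      simp [Nat.mul_div_cancel_left, Nat.mul_mod_right, ih]
    · have h : encStr s * 2 ^ (1:ℕ) + encStr [true] = (2 * encStr s + 1) + 1 := by
        simp [encStr]; ring
      simp only [List.length_singleton, h]
      rw [decodeStr]
      have h1 : (2 * encStr s + 1) / 2 = encStr s := by omega
      have h2 : (2 * encStr s + 1) % 2 = 1 := by omega
      simp [h1, h2, ih]

theorem encStr_injective : Function.Injective encStr := fun l l' h => by
  rw [← decodeStr_encStr l, h, decodeStr_encStr]

theorem strLen_encStr (l : List Bool) : strLen (encStr l) = l.length := by
  have h := encStr_bounds l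
  exact Nat.log_eq_of_pow_le_of_lt_pow h.1 h.2

theorem decodeStr_length (n : ℕ) : (decodeStr n).length = strLen n := by
  conv_rhs => rw [← encStr_decodeStr n]
  rw [strLen_encStr]

theorem strLen_zero : strLen 0 = 0 := by simp [strLen]

theorem strLen_succ (n : ℕ) : strLen (n + 1) = strLen (n / 2) + 1 := by
  rw [← decodeStr_length, ← decodeStr_length, decodeStr]
  simp

theorem encStr_div (v u : List Bool) :
    (encStr (v ++ u) + 1) / 2 ^ u.length = encStr v + 1 := by
  rw [encStr_append, Nat.add_assoc, mul_comm,
    Nat.mul_add_div (Nat.two_pow_pos u.length)]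
  have hb := encStr_bounds u
  have h1 : (encStr u + 1) / 2 ^ u.length = 1 := by
    have hlt : encStr u + 1 < 2 * 2 ^ u.length := by
      have := hb.2; rw [pow_succ] at this; omega
    rw [Nat.div_eq_sub_div (Nat.two_pow_pos u.length) hb.1]
    rw [Nat.div_eq_of_lt (by omega)]
  omega

theorem strPrefix_encStr {s t : List Bool} :
    StrPrefix (encStr s) (encStr t) ↔ s <+: t := by
  constructor
  · rintro ⟨m, hm⟩
    have hle : 2 ^ m ≤ encStr t + 1 := by
      by_contra hc
      push_neg at hc
      rw [Nat.div_eq_of_lt hc] at hm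
      omega
    have hm' : m ≤ t.length := by
      have h2 := (encStr_bounds t).2
      have h3 : (2:ℕ) ^ m < 2 ^ (t.length + 1) := lt_of_le_of_lt hle h2
      have := (Nat.pow_lt_pow_iff_right (a := 2) (by norm_num)).1 h3
      omega
    have htv : t.take (t.length - m) ++ t.drop (t.length - m) = t :=
      List.take_append_drop _ t
    have hu : (t.drop (t.length - m)).length = m := by
      rw [List.length_drop]; omega
    have hdiv : (encStr t + 1) / 2 ^ m = encStr (t.take (t.length - m)) + 1 := by
      have h5 := encStr_div (t.take (t.length - m)) (t.drop (t.length - m))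
      rw [htv, hu] at h5
      exact h5
    have hvs : encStr (t.take (t.length - m)) = encStr s := by omega
    have : t.take (t.length - m) = s := encStr_injective hvs
    exact ⟨t.drop (t.length - m), by rw [← this]; exact htv⟩
  · rintro ⟨u, rfl⟩
    exact ⟨u.length, encStr_div s u⟩

theorem strPrefix_le {x y : ℕ} (h : StrPrefix x y) : x ≤ y := by
  obtain ⟨m, hm⟩ := h
  have := Nat.div_le_self (y + 1) (2 ^ m)
  omega

theorem strPrefix_refl (x : ℕ) : StrPrefix x x := ⟨0, by simp⟩

theorem strPrefix_iff_bdd {x y : ℕ} :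
    StrPrefix x y ↔ ∃ m < y + 1, (y + 1) / 2 ^ m = x + 1 := by
  constructor
  · rintro ⟨m, hm⟩
    have hle : 2 ^ m ≤ y + 1 := by
      by_contra hc
      push_neg at hc
      rw [Nat.div_eq_of_lt hc] at hm
      omega
    have : m < 2 ^ m := Nat.lt_two_pow_self
    exact ⟨m, by omega, hm⟩
  · rintro ⟨m, _, hm⟩
    exact ⟨m, hm⟩

end SolovayAux

section SolovayAux2

open Nat.Partrec (Code)
open Nat.Partrec.Code
open Denumerable (ofNat)

/-- The string `1^e 0 w(p)`, as a natural number. -/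
def ozNum (e p : ℕ) : ℕ := encStr (List.replicate e true ++ false :: decodeStr p)

theorem encStr_replicate (e : ℕ) : encStr (List.replicate e true) = 2 ^ (e + 1) - 2 := by
  induction e with
  | zero => simp [encStr]
  | succ e ih =>
    rw [List.replicate_succ]
    have h := encStr_append [true] (List.replicate e true)
    have h1 : encStr [true] = 2 := rfl
    have h2 : (2:ℕ) ^ (e + 1 + 1) = 2 * 2 ^ (e + 1) := by rw [pow_succ]; ring
    have h3 : (2:ℕ) ≤ 2 ^ (e + 1) := by
      have : (2:ℕ) ^ 1 ≤ 2 ^ (e + 1) := Nat.pow_le_pow_right (by norm_num) (by omega)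
      simpa using this
    rw [show (true :: List.replicate e true) = [true] ++ List.replicate e true from rfl, h,
      h1, List.length_replicate, ih, h2]
    omega

theorem encStr_oz (e : ℕ) :
    encStr (List.replicate e true ++ [false]) = 2 ^ (e + 2) - 3 := by
  rw [encStr_append, encStr_replicate]
  have h1 : encStr [false] = 1 := rfl
  have h2 : (2:ℕ) ≤ 2 ^ (e + 1) := by
    have : (2:ℕ) ^ 1 ≤ 2 ^ (e + 1) := Nat.pow_le_pow_right (by norm_num) (by omega)
    simpa using this
  have h3 : (2:ℕ) ^ (e + 2) = 2 * 2 ^ (e + 1) := by rw [pow_succ]; ring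
  simp only [h1, List.length_singleton, pow_one]
  omega

theorem ozNum_eq (e p : ℕ) : ozNum e p = (2 ^ (e + 2) - 3) * 2 ^ strLen p + p := by
  unfold ozNum
  rw [show List.replicate e true ++ false :: decodeStr p
      = (List.replicate e true ++ [false]) ++ decodeStr p by simp]
  rw [encStr_append, encStr_oz, encStr_decodeStr, decodeStr_length]

theorem strLen_ozNum (e p : ℕ) : strLen (ozNum e p) = e + 1 + strLen p := by
  unfold ozNum
  rw [strLen_encStr]
  simp [decodeStr_length]
  omega

theorem replicate_parse : ∀ (a : ℕ) {b : ℕ} {u v : List Bool},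
    (List.replicate a true ++ false :: u) <+: (List.replicate b true ++ false :: v) →
      a = b ∧ u <+: v := by
  intro a
  induction a with
  | zero =>
    intro b u v h
    cases b with
    | zero => simpa [List.cons_prefix_cons] using h
    | succ b => simp [List.replicate_succ, List.cons_prefix_cons] at h
  | succ a ih =>
    intro b u v h
    cases b with
    | zero => simp [List.replicate_succ, List.cons_prefix_cons] at h
    | succ b =>
      rw [List.replicate_succ, List.replicate_succ, List.cons_append, List.cons_append,
        List.cons_prefix_cons] at h
      obtain ⟨hab, huv⟩ := ih h.2
      exact ⟨by omega, huv⟩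

theorem ozNum_prefix {e p e' p' : ℕ} (h : StrPrefix (ozNum e p) (ozNum e' p')) :
    e = e' ∧ StrPrefix p p' := by
  unfold ozNum at h
  rw [strPrefix_encStr] at h
  obtain ⟨he, hu⟩ := replicate_parse e h
  refine ⟨he, ?_⟩
  have h2 := (strPrefix_encStr (s := decodeStr p) (t := decodeStr p')).2 hu
  rwa [encStr_decodeStr, encStr_decodeStr] at h2

theorem ozNum_inj {e p e' p' : ℕ} (h : ozNum e p = ozNum e' p') : e = e' ∧ p = p' := by
  have h1 : StrPrefix (ozNum e p) (ozNum e' p') := by rw [h]; exact strPrefix_refl _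
  have h2 : StrPrefix (ozNum e' p') (ozNum e p) := by rw [h]; exact strPrefix_refl _
  obtain ⟨he, hp⟩ := ozNum_prefix h1
  obtain ⟨_, hp'⟩ := ozNum_prefix h2
  exact ⟨he, le_antisymm (strPrefix_le hp) (strPrefix_le hp')⟩

/-- The key decidable event: machine `e` halts on `p` in exactly `t` steps, and no string
comparable with `p` halts within `t` steps. -/
def EvA (e p t : ℕ) : Prop :=
  (evaln t (ofNat Code e) p).isSome = true ∧
    ∀ p' ≤ t, p' ≠ p → (StrPrefix p' p ∨ StrPrefix p p') →
      evaln t (ofNat Code e) p' = none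

def EvAleast (e p t : ℕ) : Prop := EvA e p t ∧ ∀ t' < t, ¬EvA e p t'

theorem EvA_exists {c : Code} {p x : ℕ} (hpf : PrefixFree c) (hx : x ∈ c.eval p) :
    ∃ t, EvA (Encodable.encode c) p t := by
  obtain ⟨k, hk⟩ := evaln_complete.1 hx
  refine ⟨k, ?_, ?_⟩
  · rw [Denumerable.ofNat_encode]
    exact Option.isSome_iff_exists.2 ⟨x, hk⟩
  · intro p' _ hne hcomp
    rw [Denumerable.ofNat_encode]
    by_contra hcon
    obtain ⟨y, hy⟩ := Option.ne_none_iff_exists'.1 hcon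
    have hdom' : (c.eval p').Dom := Part.dom_iff_mem.2 ⟨y, evaln_sound hy⟩
    have hdom : (c.eval p).Dom := Part.dom_iff_mem.2 ⟨x, hx⟩
    rcases hcomp with hpre | hpre
    · exact hne (hpf p' p hdom' hdom hpre)
    · exact hne ((hpf p p' hdom hdom' hpre).symm)

theorem EvA_unique {e p p' t t' : ℕ} (h : EvA e p t) (h' : EvA e p' t')
    (hpre : StrPrefix p p') : p = p' := by
  by_contra hne
  rcases le_total t t' with hle | hle
  · obtain ⟨x, hx⟩ := Option.isSome_iff_exists.1 h.1
    have hmem : x ∈ evaln t (ofNat Code e) p := hx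
    have hb : p < t := evaln_bound hmem
    have hmono := evaln_mono hle hmem
    have hnone := h'.2 p (le_trans (le_of_lt hb) hle) hne (Or.inl hpre)
    rw [hnone] at hmono
    simp at hmono
  · obtain ⟨x, hx⟩ := Option.isSome_iff_exists.1 h'.1
    have hmem : x ∈ evaln t' (ofNat Code e) p' := hx
    have hb : p' < t' := evaln_bound hmem
    have hmono := evaln_mono hle hmem
    have hnone := h.2 p' (le_trans (le_of_lt hb) hle) (Ne.symm hne) (Or.inr hpre)
    rw [hnone] at hmono
    simp at hmono

theorem EvAleast_unique {e p t t' : ℕ} (h : EvAleast e p t) (h' : EvAleast e p t') :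
    t = t' := by
  rcases lt_trichotomy t t' with hlt | heq | hlt
  · exact absurd h.1 (h'.2 t hlt)
  · exact heq
  · exact absurd h'.1 (h.2 t' hlt)

end SolovayAux2

section SolovayAux3

open Nat.Partrec (Code)
open Nat.Partrec.Code
open Denumerable (ofNat)

/-! ### Boolean bounded quantifiers -/

def bAll (k : ℕ) (f : ℕ → Bool) : Bool := (List.range k).foldr (fun n r => f n && r) true

def bEx (k : ℕ) (f : ℕ → Bool) : Bool := (List.range k).foldr (fun n r => f n || r) false

theorem foldr_and_iff (f : ℕ → Bool) : ∀ l : List ℕ,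
    (l.foldr (fun n r => f n && r) true = true ↔ ∀ x ∈ l, f x = true) := by
  intro l
  induction l with
  | nil => simp
  | cons a l ih => simp [Bool.and_eq_true, ih]

theorem foldr_or_iff (f : ℕ → Bool) : ∀ l : List ℕ,
    (l.foldr (fun n r => f n || r) false = true ↔ ∃ x ∈ l, f x = true) := by
  intro l
  induction l with
  | nil => simp
  | cons a l ih => simp [Bool.or_eq_true, ih]

theorem bAll_iff {k : ℕ} {f : ℕ → Bool} : bAll k f = true ↔ ∀ n < k, f n = true := by
  rw [bAll, foldr_and_iff]
  simp [List.mem_range]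

theorem bEx_iff {k : ℕ} {f : ℕ → Bool} : bEx k f = true ↔ ∃ n < k, f n = true := by
  rw [bEx, foldr_or_iff]
  simp [List.mem_range]

theorem primrec_bAll {α : Type} [Primcodable α] {g : α → ℕ} {f : α → ℕ → Bool}
    (hg : Primrec g) (hf : Primrec₂ f) : Primrec fun a => bAll (g a) (f a) := by
  have h := Primrec.list_foldr (Primrec.list_range.comp hg) (Primrec.const true)
    ((Primrec.and.comp (hf.comp Primrec.fst (Primrec.fst.comp Primrec.snd))
      (Primrec.snd.comp Primrec.snd)).to₂)
  exact h.of_eq fun a => rfl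

theorem primrec_bEx {α : Type} [Primcodable α] {g : α → ℕ} {f : α → ℕ → Bool}
    (hg : Primrec g) (hf : Primrec₂ f) : Primrec fun a => bEx (g a) (f a) := by
  have h := Primrec.list_foldr (Primrec.list_range.comp hg) (Primrec.const false)
    ((Primrec.or.comp (hf.comp Primrec.fst (Primrec.fst.comp Primrec.snd))
      (Primrec.snd.comp Primrec.snd)).to₂)
  exact h.of_eq fun a => rfl

theorem primrec_pow2 : Primrec fun n : ℕ => 2 ^ n := by
  have key : ∀ n : ℕ, (Nat.rec 1 (fun _ ih => 2 * ih) n : ℕ) = 2 ^ n := by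
    intro n
    induction n with
    | zero => rfl
    | succ n ih =>
      show 2 * (Nat.rec 1 (fun _ ih => 2 * ih) n : ℕ) = 2 ^ (n + 1)
      rw [ih, pow_succ, Nat.mul_comm]
  have h : Primrec fun n : ℕ => (Nat.rec 1 (fun _ ih => 2 * ih) n : ℕ) :=
    Primrec.nat_rec₁ 1 ((Primrec.nat_mul.comp (Primrec.const 2) Primrec.snd).to₂)
  exact h.of_eq key

/-! ### Boolean versions of the predicates -/

def prefB (x y : ℕ) : Bool := bEx (y + 1) fun m => (y + 1) / 2 ^ m == x + 1

theorem prefB_iff {x y : ℕ} : prefB x y = true ↔ StrPrefix x y := by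
  rw [prefB, bEx_iff, strPrefix_iff_bdd]
  simp

theorem primrec_prefB : Primrec₂ prefB := by
  have h : Primrec fun q : ℕ × ℕ => bEx (q.2 + 1) fun m => (q.2 + 1) / 2 ^ m == q.1 + 1 :=
    primrec_bEx (Primrec.succ.comp Primrec.snd)
      ((Primrec.beq.comp
        (Primrec.nat_div.comp (Primrec.succ.comp (Primrec.snd.comp Primrec.fst))
          (primrec_pow2.comp Primrec.snd))
        (Primrec.succ.comp (Primrec.fst.comp Primrec.fst))).to₂)
  exact h.to₂.of_eq fun x y => rfl

def evB (e p t : ℕ) : Option ℕ := evaln t (ofNat Code e) p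

theorem primrec_evB : Primrec fun m : ℕ × ℕ × ℕ => evB m.1 m.2.1 m.2.2 :=
  (Nat.Partrec.Code.primrec_evaln.comp (Primrec.pair
    (Primrec.pair (Primrec.snd.comp Primrec.snd) ((Primrec.ofNat Code).comp Primrec.fst))
    (Primrec.fst.comp Primrec.snd))).of_eq fun m => rfl

def aB (e p t : ℕ) : Bool :=
  (evB e p t).isSome && bAll (t + 1) fun p' =>
    (p' == p) || (!(prefB p' p || prefB p p') || !(evB e p' t).isSome)

theorem isSome_false_iff {o : Option ℕ} : o.isSome = false ↔ o = none := by
  cases o <;> simp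

theorem aB_iff {e p t : ℕ} : aB e p t = true ↔ EvA e p t := by
  rw [aB, Bool.and_eq_true, bAll_iff, EvA]
  apply and_congr Iff.rfl
  constructor
  · intro h p' hle hne hcomp
    have h2 := h p' (Nat.lt_succ_of_le hle)
    simp only [Bool.or_eq_true, beq_iff_eq, Bool.not_eq_true', Bool.or_eq_false_iff,
      isSome_false_iff] at h2
    rcases h2 with h2 | ⟨h2a, h2b⟩ | h2
    · exact absurd h2 hne
    · rcases hcomp with hc | hc
      · exact absurd (prefB_iff.2 hc) (by rw [h2a]; simp)
      · exact absurd (prefB_iff.2 hc) (by rw [h2b]; simp)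
    · exact h2
  · intro h p' hlt
    simp only [Bool.or_eq_true, beq_iff_eq, Bool.not_eq_true', Bool.or_eq_false_iff,
      isSome_false_iff]
    by_cases h1 : p' = p
    · exact Or.inl h1
    by_cases h2 : StrPrefix p' p ∨ StrPrefix p p'
    · exact Or.inr (Or.inr (h p' (Nat.lt_succ_iff.1 hlt) h1 h2))
    · push_neg at h2
      refine Or.inr (Or.inl ⟨?_, ?_⟩)
      · exact Bool.eq_false_iff.2 fun hc => h2.1 (prefB_iff.1 hc)
      · exact Bool.eq_false_iff.2 fun hc => h2.2 (prefB_iff.1 hc)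

set_option maxHeartbeats 1000000 in
theorem primrec_aB : Primrec fun m : ℕ × ℕ × ℕ => aB m.1 m.2.1 m.2.2 := by
  have he : Primrec fun x : (ℕ × ℕ × ℕ) × ℕ => x.1.1 := Primrec.fst.comp Primrec.fst
  have hp : Primrec fun x : (ℕ × ℕ × ℕ) × ℕ => x.1.2.1 :=
    Primrec.fst.comp (Primrec.snd.comp Primrec.fst)
  have ht : Primrec fun x : (ℕ × ℕ × ℕ) × ℕ => x.1.2.2 :=
    Primrec.snd.comp (Primrec.snd.comp Primrec.fst)
  have hq : Primrec fun x : (ℕ × ℕ × ℕ) × ℕ => x.2 := Primrec.snd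
  have hf : Primrec₂ fun (m : ℕ × ℕ × ℕ) (p' : ℕ) =>
      (p' == m.2.1) ||
        (!(prefB p' m.2.1 || prefB m.2.1 p') || !(evB m.1 p' m.2.2).isSome) :=
    ((Primrec.or.comp (Primrec.beq.comp hq hp)
      (Primrec.or.comp
        (Primrec.not.comp (Primrec.or.comp (primrec_prefB.comp hq hp) (primrec_prefB.comp hp hq)))
        (Primrec.not.comp (Primrec.option_isSome.comp
          (primrec_evB.comp (Primrec.pair he (Primrec.pair hq ht)))))))).to₂
  exact (Primrec.and.comp (Primrec.option_isSome.comp primrec_evB)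
    (primrec_bAll (Primrec.succ.comp (Primrec.snd.comp Primrec.snd)) hf)).of_eq fun m => rfl

def alB (e p t : ℕ) : Bool := aB e p t && bAll t fun t' => !aB e p t'

theorem alB_iff {e p t : ℕ} : alB e p t = true ↔ EvAleast e p t := by
  rw [alB, Bool.and_eq_true, bAll_iff, aB_iff, EvAleast]
  apply and_congr Iff.rfl
  constructor
  · intro h t' hlt hA
    have h2 := h t' hlt
    rw [Bool.not_eq_true'] at h2
    exact absurd (aB_iff.2 hA) (by rw [h2]; simp)
  · intro h t' hlt
    rw [Bool.not_eq_true']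
    exact Bool.eq_false_iff.2 fun hc => h t' hlt (aB_iff.1 hc)

set_option maxHeartbeats 1000000 in
theorem primrec_alB : Primrec fun m : ℕ × ℕ × ℕ => alB m.1 m.2.1 m.2.2 := by
  have hf : Primrec₂ fun (m : ℕ × ℕ × ℕ) (t' : ℕ) => !aB m.1 m.2.1 t' :=
    (Primrec.not.comp (primrec_aB.comp (Primrec.pair (Primrec.fst.comp Primrec.fst)
      (Primrec.pair (Primrec.fst.comp (Primrec.snd.comp Primrec.fst)) Primrec.snd)))).to₂
  exact (Primrec.and.comp primrec_aB
    (primrec_bAll (Primrec.snd.comp Primrec.snd) hf)).of_eq fun m => rfl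

instance EvA.decidable (e p t : ℕ) : Decidable (EvA e p t) := decidable_of_iff _ aB_iff

instance EvAleast.decidable (e p t : ℕ) : Decidable (EvAleast e p t) :=
  decidable_of_iff _ alB_iff

theorem primrec_strLen : Primrec strLen := by
  have hlen : Primrec fun x : ℕ × List ℕ => x.2.length := Primrec.list_length.comp Primrec.snd
  have h2 : Primrec₂ fun (_ : ℕ) (l : List ℕ) =>
      if l.length = 0 then some (0 : ℕ) else some (l.getD ((l.length - 1) / 2) 0 + 1) :=
    (Primrec.ite (Primrec.eq.comp hlen (Primrec.const 0)) (Primrec.const (some 0))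
      (Primrec.option_some.comp (Primrec.succ.comp
        ((Primrec.list_getD 0).comp Primrec.snd
          (Primrec.nat_div.comp (Primrec.nat_sub.comp hlen (Primrec.const 1))
            (Primrec.const 2)))))).to₂
  have hrec := Primrec.nat_strong_rec (fun (_ : ℕ) n => strLen n) h2 ?_
  · exact (hrec.comp (Primrec.const 0) Primrec.id).of_eq fun n => rfl
  · intro a n
    cases n with
    | zero => simp [strLen_zero]
    | succ n =>
      have hlen2 : ((List.range (n + 1)).map (fun k => strLen k)).length = n + 1 := by simp
      have hget : ((List.range (n + 1)).map (fun k => strLen k)).getD (n / 2) 0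
          = strLen (n / 2) := by
        rw [List.getD_eq_getElem?_getD, List.getElem?_map,
          List.getElem?_range (by omega : n / 2 < n + 1)]
        rfl
      simp only [hlen2]
      rw [if_neg (by omega)]
      have hidx : (n + 1 - 1) / 2 = n / 2 := by omega
      rw [hidx, hget, ← strLen_succ]

theorem primrec_ozNum : Primrec₂ ozNum := by
  have h : Primrec fun q : ℕ × ℕ => (2 ^ (q.1 + 2) - 3) * 2 ^ strLen q.2 + q.2 :=
    Primrec.nat_add.comp
      (Primrec.nat_mul.comp
        (Primrec.nat_sub.comp
          (primrec_pow2.comp (Primrec.succ.comp (Primrec.succ.comp Primrec.fst)))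
          (Primrec.const 3))
        (primrec_pow2.comp (primrec_strLen.comp Primrec.snd)))
      Primrec.snd
  exact (h.of_eq fun q => (ozNum_eq q.1 q.2).symm).to₂

end SolovayAux3

section SolovayAux4

open Nat.Partrec (Code)
open Nat.Partrec.Code
open Denumerable (ofNat)

theorem rfindOpt_unique {f : ℕ → Option ℕ} {m : ℕ} {v : ℕ} (hm : f m = some v)
    (hu : ∀ k x, f k = some x → k = m) : v ∈ Nat.rfindOpt f := by
  have hdom : (Nat.rfindOpt f).Dom := Nat.rfindOpt_dom.2 ⟨m, v, hm⟩
  obtain ⟨k, hk⟩ := Nat.rfindOpt_spec (Part.get_mem hdom)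
  have hk' : f k = some ((Nat.rfindOpt f).get hdom) := hk
  have hkm := hu k _ hk'
  rw [hkm, hm] at hk'
  exact ⟨hdom, (Option.some_inj.1 hk').symm⟩

/-- A simulating machine with prefix-free domain: on input `1^e 0 p`, find the least `t`
with `EvA e p t` and output `G ⟨e, p, t⟩`. -/
def simFn (G : ℕ → ℕ) : ℕ →. ℕ := fun q =>
  Nat.rfindOpt fun m =>
    bif (q == ozNum m.unpair.1 m.unpair.2.unpair.1)
        && alB m.unpair.1 m.unpair.2.unpair.1 m.unpair.2.unpair.2
    then some (G m) else none

theorem simFn_partrec {G : ℕ → ℕ} (hG : Computable G) : Partrec (simFn G) := by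
  have hE : Primrec fun x : ℕ × ℕ => x.2.unpair.1 :=
    Primrec.fst.comp (Primrec.unpair.comp Primrec.snd)
  have hPT : Primrec fun x : ℕ × ℕ => x.2.unpair.2 :=
    Primrec.snd.comp (Primrec.unpair.comp Primrec.snd)
  have hP : Primrec fun x : ℕ × ℕ => x.2.unpair.2.unpair.1 :=
    Primrec.fst.comp (Primrec.unpair.comp hPT)
  have hT : Primrec fun x : ℕ × ℕ => x.2.unpair.2.unpair.2 :=
    Primrec.snd.comp (Primrec.unpair.comp hPT)
  have hcond : Primrec fun x : ℕ × ℕ =>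
      (x.1 == ozNum x.2.unpair.1 x.2.unpair.2.unpair.1)
        && alB x.2.unpair.1 x.2.unpair.2.unpair.1 x.2.unpair.2.unpair.2 :=
    Primrec.and.comp
      (Primrec.beq.comp Primrec.fst (primrec_ozNum.comp hE hP))
      (primrec_alB.comp (Primrec.pair hE (Primrec.pair hP hT)))
  have hbody : Computable fun x : ℕ × ℕ =>
      bif (x.1 == ozNum x.2.unpair.1 x.2.unpair.2.unpair.1)
            && alB x.2.unpair.1 x.2.unpair.2.unpair.1 x.2.unpair.2.unpair.2
      then some (G x.2) else none :=
    Computable.cond hcond.to_comp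
      (Computable.option_some.comp (hG.comp Computable.snd))
      (Computable.const none)
  exact (Partrec.rfindOpt hbody.to₂).of_eq fun q => rfl

theorem simFn_mem {G : ℕ → ℕ} {e p t : ℕ} (h : EvAleast e p t) :
    G (Nat.pair e (Nat.pair p t)) ∈ simFn G (ozNum e p) := by
  apply rfindOpt_unique (m := Nat.pair e (Nat.pair p t))
  · simp [Nat.unpair_pair, alB_iff.2 h]
  · intro k x hk
    cases hb : ((ozNum e p == ozNum k.unpair.1 k.unpair.2.unpair.1)
        && alB k.unpair.1 k.unpair.2.unpair.1 k.unpair.2.unpair.2)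
    · rw [hb] at hk; simp at hk
    · rw [Bool.and_eq_true] at hb
      obtain ⟨h1, h2⟩ := hb
      have heq := ozNum_inj (beq_iff_eq.1 h1)
      have hAl' : EvAleast k.unpair.1 k.unpair.2.unpair.1 k.unpair.2.unpair.2 := alB_iff.1 h2
      rw [← heq.1, ← heq.2] at hAl'
      have ht := EvAleast_unique h hAl'
      have hkey : Nat.pair e (Nat.pair p t) = k := by
        rw [heq.1, heq.2, ht, Nat.pair_unpair, Nat.pair_unpair]
      exact hkey.symm

theorem simFn_dom {G : ℕ → ℕ} {q : ℕ} (h : (simFn G q).Dom) :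
    ∃ e p t, q = ozNum e p ∧ EvAleast e p t := by
  simp only [simFn, Nat.rfindOpt_dom] at h
  obtain ⟨m, a, ha⟩ := h
  cases hb : ((q == ozNum m.unpair.1 m.unpair.2.unpair.1)
      && alB m.unpair.1 m.unpair.2.unpair.1 m.unpair.2.unpair.2)
  · rw [hb] at ha; simp at ha
  · rw [Bool.and_eq_true] at hb
    obtain ⟨h1, h2⟩ := hb
    exact ⟨m.unpair.1, m.unpair.2.unpair.1, m.unpair.2.unpair.2,
      beq_iff_eq.1 h1, alB_iff.1 h2⟩

theorem simFn_prefixFree {G : ℕ → ℕ} {c : Code} (hc : c.eval = simFn G) : PrefixFree c := by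
  intro p q hp hq hpre
  rw [hc] at hp hq
  obtain ⟨e, a, t, rfl, hA⟩ := simFn_dom hp
  obtain ⟨e', a', t', rfl, hA'⟩ := simFn_dom hq
  obtain ⟨he, hpre'⟩ := ozNum_prefix hpre
  subst he
  have haa : a = a' := EvA_unique hA.1 hA'.1 hpre'
  rw [haa]

/-- The unary machine: on input `1^n 0`, output `n`. -/
def uFn : ℕ →. ℕ := fun q => Nat.rfindOpt fun n => bif q == ozNum n 0 then some n else none

theorem uFn_partrec : Partrec uFn := by
  have hcond : Primrec fun x : ℕ × ℕ => (x.1 == ozNum x.2 0) :=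
    Primrec.beq.comp Primrec.fst (primrec_ozNum.comp Primrec.snd (Primrec.const 0))
  have hbody : Computable fun x : ℕ × ℕ =>
      bif x.1 == ozNum x.2 0 then some x.2 else none :=
    Computable.cond hcond.to_comp (Computable.option_some.comp Computable.snd)
      (Computable.const none)
  exact (Partrec.rfindOpt hbody.to₂).of_eq fun q => rfl

theorem uFn_mem (x : ℕ) : x ∈ uFn (ozNum x 0) := by
  apply rfindOpt_unique (m := x)
  · simp
  · intro k y hk
    cases hb : (ozNum x 0 == ozNum k 0)
    · rw [hb] at hk; simp at hk
    · exact ((ozNum_inj (beq_iff_eq.1 hb)).1).symm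

theorem uFn_dom {q : ℕ} (h : (uFn q).Dom) : ∃ n, q = ozNum n 0 := by
  simp only [uFn, Nat.rfindOpt_dom] at h
  obtain ⟨m, a, ha⟩ := h
  cases hb : (q == ozNum m 0)
  · rw [hb] at ha; simp at ha
  · exact ⟨m, beq_iff_eq.1 hb⟩

theorem uFn_prefixFree {c : Code} (hc : c.eval = uFn) : PrefixFree c := by
  intro p q hp hq hpre
  rw [hc] at hp hq
  obtain ⟨n, rfl⟩ := uFn_dom hp
  obtain ⟨n', rfl⟩ := uFn_dom hq
  obtain ⟨he, -⟩ := ozNum_prefix hpre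
  rw [he]

theorem K_le {x : ℕ} {c : Code} {p : ℕ} (h1 : PrefixFree c) (h2 : x ∈ c.eval p) :
    K x ≤ Encodable.encode c + 1 + strLen p :=
  Nat.sInf_le ⟨c, p, h1, h2, rfl⟩

/-- Decode a triple and run the machine: recovers `y` from `⟨encode c, p, t⟩` whenever
`c(p) = y` and `EvA (encode c) p t`. -/
def ggFn (n : ℕ) : ℕ := (evB n.unpair.1 n.unpair.2.unpair.1 n.unpair.2.unpair.2).getD 0

theorem primrec_triple : Primrec fun n : ℕ => (n.unpair.1, n.unpair.2.unpair.1, n.unpair.2.unpair.2) :=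
  Primrec.pair (Primrec.fst.comp Primrec.unpair)
    (Primrec.pair
      (Primrec.fst.comp (Primrec.unpair.comp (Primrec.snd.comp Primrec.unpair)))
      (Primrec.snd.comp (Primrec.unpair.comp (Primrec.snd.comp Primrec.unpair))))

theorem primrec_ggFn : Primrec ggFn :=
  (Primrec.option_getD.comp (primrec_evB.comp primrec_triple) (Primrec.const 0)).of_eq
    fun n => rfl

theorem ggFn_eval {c : Code} {p y t : ℕ} (h : EvA (Encodable.encode c) p t)
    (hy : y ∈ c.eval p) : ggFn (Nat.pair (Encodable.encode c) (Nat.pair p t)) = y := by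
  obtain ⟨v, hv⟩ := Option.isSome_iff_exists.1 h.1
  have hv' : v ∈ evaln t (ofNat Code (Encodable.encode c)) p := hv
  rw [Denumerable.ofNat_encode] at hv'
  have hvx : v = y := Part.mem_unique (evaln_sound hv') hy
  simp only [ggFn, Nat.unpair_pair, evB]
  rw [hv]
  simp [hvx]

/-- The Solovay function. -/
def fSol (n : ℕ) : ℕ :=
  bif alB n.unpair.1 n.unpair.2.unpair.1 n.unpair.2.unpair.2
  then n.unpair.1 + 1 + strLen n.unpair.2.unpair.1 else n

theorem primrec_fSol : Primrec fSol :=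
  (Primrec.cond (primrec_alB.comp primrec_triple)
    (Primrec.nat_add.comp
      (Primrec.nat_add.comp (Primrec.fst.comp Primrec.unpair) (Primrec.const 1))
      (primrec_strLen.comp (Primrec.fst.comp (Primrec.unpair.comp
        (Primrec.snd.comp Primrec.unpair)))))
    Primrec.id).of_eq fun n => rfl

end SolovayAux4

theorem solovay_function_exists :
    ∃ f : ℕ → ℕ, Computable f ∧ (∃ c : ℕ, ∀ n, K n ≤ f n + c) ∧
      (∃ c : ℕ, {n | f n ≤ K n + c}.Infinite) := by
  classical
  obtain ⟨cu, hcu⟩ := Nat.Partrec.Code.exists_code.1 (Partrec.nat_iff.1 uFn_partrec)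
  obtain ⟨cD, hcD⟩ :=
    Nat.Partrec.Code.exists_code.1 (Partrec.nat_iff.1 (simFn_partrec Computable.id))
  obtain ⟨cE, hcE⟩ := Nat.Partrec.Code.exists_code.1 (Partrec.nat_iff.1
    (simFn_partrec (primrec_ggFn.to_comp.comp primrec_ggFn.to_comp)))
  have hKspec : ∀ x : ℕ, ∃ (c : Nat.Partrec.Code) (p : ℕ), PrefixFree c ∧ x ∈ c.eval p ∧
      K x = Encodable.encode c + 1 + strLen p := by
    intro x
    have hne : {k | ∃ c p, PrefixFree c ∧ x ∈ c.eval p ∧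
        k = Encodable.encode c + 1 + strLen p}.Nonempty := by
      refine ⟨Encodable.encode cu + 1 + strLen (ozNum x 0), cu, ozNum x 0,
        uFn_prefixFree hcu, ?_, rfl⟩
      rw [hcu]
      exact uFn_mem x
    exact Nat.sInf_mem hne
  refine ⟨fSol, primrec_fSol.to_comp,
    ⟨Encodable.encode cu + Encodable.encode cD + 4, ?_⟩,
    ⟨Encodable.encode cE + 1, ?_⟩⟩
  · -- `fSol` is an upper bound for `K`
    intro n
    cases halb : alB n.unpair.1 n.unpair.2.unpair.1 n.unpair.2.unpair.2 with
    | false =>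
      have hmemu : n ∈ cu.eval (ozNum n 0) := by rw [hcu]; exact uFn_mem n
      have hK := K_le (uFn_prefixFree hcu) hmemu
      rw [strLen_ozNum, strLen_zero] at hK
      have hf : fSol n = n := by simp [fSol, halb]
      omega
    | true =>
      have hAl : EvAleast n.unpair.1 n.unpair.2.unpair.1 n.unpair.2.unpair.2 := alB_iff.1 halb
      have hmemD : Nat.pair n.unpair.1 (Nat.pair n.unpair.2.unpair.1 n.unpair.2.unpair.2)
          ∈ cD.eval (ozNum n.unpair.1 n.unpair.2.unpair.1) := by
        rw [hcD]
        exact simFn_mem hAl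
      have hn : Nat.pair n.unpair.1 (Nat.pair n.unpair.2.unpair.1 n.unpair.2.unpair.2) = n := by
        rw [Nat.pair_unpair, Nat.pair_unpair]
      rw [hn] at hmemD
      have hK := K_le (simFn_prefixFree hcD) hmemD
      rw [strLen_ozNum] at hK
      have hf : fSol n = n.unpair.1 + 1 + strLen n.unpair.2.unpair.1 := by simp [fSol, halb]
      omega
  · -- `fSol` is within a constant of `K` infinitely often
    choose cf pf hpf hmem hK using hKspec
    have hA : ∀ x, ∃ t, EvA (Encodable.encode (cf x)) (pf x) t := fun x =>
      EvA_exists (hpf x) (hmem x)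
    have hAl : ∀ x, EvAleast (Encodable.encode (cf x)) (pf x) (Nat.find (hA x)) := fun x =>
      ⟨Nat.find_spec (hA x), fun t' ht' => Nat.find_min (hA x) ht'⟩
    set nOf : ℕ → ℕ := fun x =>
      Nat.pair (Encodable.encode (cf x)) (Nat.pair (pf x) (Nat.find (hA x))) with hnOf
    have hggn : ∀ x, ggFn (nOf x) = x := fun x => ggFn_eval (hAl x).1 (hmem x)
    have hinj : Function.Injective nOf := fun a b hab => by
      rw [← hggn a, ← hggn b, hab]
    apply Set.infinite_of_injective_forall_mem hinj
    intro x
    show fSol (nOf x) ≤ K (nOf x) + (Encodable.encode cE + 1)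
    have halb : alB (Encodable.encode (cf x)) (pf x) (Nat.find (hA x)) = true :=
      alB_iff.2 (hAl x)
    have hfn : fSol (nOf x) = K x := by
      simp only [fSol, hnOf, Nat.unpair_pair, halb, cond_true]
      exact (hK x).symm
    obtain ⟨d, r, hpfd, hmemd, hKd⟩ :
        ∃ (d : Nat.Partrec.Code) (r : ℕ), PrefixFree d ∧ nOf x ∈ d.eval r ∧
          K (nOf x) = Encodable.encode d + 1 + strLen r := by
      have hne : {k | ∃ c p, PrefixFree c ∧ nOf x ∈ c.eval p ∧
          k = Encodable.encode c + 1 + strLen p}.Nonempty := by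
        refine ⟨Encodable.encode cu + 1 + strLen (ozNum (nOf x) 0), cu, ozNum (nOf x) 0,
          uFn_prefixFree hcu, ?_, rfl⟩
        rw [hcu]
        exact uFn_mem (nOf x)
      exact Nat.sInf_mem hne
    have hAd : ∃ t, EvA (Encodable.encode d) r t := EvA_exists hpfd hmemd
    have hAld : EvAleast (Encodable.encode d) r (Nat.find hAd) :=
      ⟨Nat.find_spec hAd, fun t' ht' => Nat.find_min hAd ht'⟩
    have hval : ggFn (Nat.pair (Encodable.encode d) (Nat.pair r (Nat.find hAd))) = nOf x :=
      ggFn_eval hAld.1 hmemd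
    have hmm2 : x ∈ cE.eval (ozNum (Encodable.encode d) r) := by
      rw [hcE]
      have hsim := simFn_mem (G := fun m => ggFn (ggFn m)) hAld
      have hsim2 : ggFn (ggFn (Nat.pair (Encodable.encode d) (Nat.pair r (Nat.find hAd)))) ∈
          simFn (fun m => ggFn (ggFn m)) (ozNum (Encodable.encode d) r) := hsim
      rwa [hval, hggn x] at hsim2
    have hKE := K_le (simFn_prefixFree hcE) hmm2
    rw [strLen_ozNum] at hKE
    rw [hfn, hKd]
    omega

end Solovay
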